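/- In the proxy-metric model, the naive (plug-in) expected reward of the decision rule that launches when the observed proxy effect is positive satisfies E[ τ̂_Y | τ̂_S > 0 ] = √(2/π) · ( Λ₁₂ + 2Ω₁₂/M ) / √( Λ₂₂ + 2Ω₂₂/M ); in particular it depends on the sampling-error covariance Ω₁₂ and not only on the true treatment-effect covariance Λ₁₂. -/

import Mathlib

open MeasureTheory ProbabilityTheory Real NNReal ENNReal

/-- A measure `Q` on `ℝ × ℝ` is bivariate Gaussian with mean `(μA, μB)` and covariance
matrix `[[vA, vAB], [vAB, vB]]` iff every linear functional pushes it forward to the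
one-dimensional Gaussian with the corresponding mean and variance (possibly degenerate,
i.e. a Dirac mass, when the variance vanishes). -/
def IsBivariateGaussian (Q : Measure (ℝ × ℝ)) (μA μB vA vAB vB : ℝ) : Prop :=
  ∀ a b : ℝ, Q.map (fun p => a * p.1 + b * p.2) =
    gaussianReal (a * μA + b * μB)
      (Real.toNNReal (a ^ 2 * vA + 2 * a * b * vAB + b ^ 2 * vB))

open Set Filter Topology


lemma quad_nonneg {A B C : ℝ} (hA : 0 ≤ A) (hC : 0 ≤ C) (hB : B^2 ≤ A*C) (a b : ℝ) :
    0 ≤ a^2*A + 2*a*b*B + b^2*C := by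
  have h4 : 4*(a*b)^2 * B^2 ≤ 4*(a*b)^2 * (A*C) :=
    mul_le_mul_of_nonneg_left hB (by positivity)
  have key : (2*(a*b)*B)^2 ≤ (a^2*A + b^2*C)^2 := by nlinarith [sq_nonneg (a^2*A - b^2*C), h4]
  have h5 : 0 ≤ a^2*A + b^2*C := by positivity
  nlinarith [key, h5]

lemma pdf_conv_pointwise {v₁ v₂ : ℝ≥0} (hv₁ : v₁ ≠ 0) (hv₂ : v₂ ≠ 0) (z x : ℝ) :
    gaussianPDFReal 0 v₁ x * gaussianPDFReal 0 v₂ (z - x) =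
      gaussianPDFReal 0 (v₁ + v₂) z *
        gaussianPDFReal ((v₁ : ℝ) * z / ((v₁ : ℝ) + v₂)) (v₁ * v₂ / (v₁ + v₂)) x := by
  have h1 : (0:ℝ) < v₁ := lt_of_le_of_ne v₁.coe_nonneg (by exact_mod_cast (Ne.symm hv₁))
  have h2 : (0:ℝ) < v₂ := lt_of_le_of_ne v₂.coe_nonneg (by exact_mod_cast (Ne.symm hv₂))
  have hw : ((v₁ * v₂ / (v₁ + v₂) : ℝ≥0) : ℝ) = (v₁:ℝ) * v₂ / ((v₁:ℝ) + v₂) := by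
    push_cast; ring
  simp only [gaussianPDFReal, sub_zero, NNReal.coe_add, hw]
  rw [mul_mul_mul_comm, mul_mul_mul_comm ((√(2 * π * ((v₁:ℝ) + v₂)))⁻¹)]
  have hc : (√(2 * π * v₁))⁻¹ * (√(2 * π * v₂))⁻¹
      = (√(2 * π * ((v₁:ℝ)+v₂)))⁻¹ * (√(2 * π * ((v₁:ℝ)*v₂/((v₁:ℝ)+v₂))))⁻¹ := by
    rw [← mul_inv, ← mul_inv, ← Real.sqrt_mul (by positivity), ← Real.sqrt_mul (by positivity)]
    congr 1
    field_simp
  rw [hc, ← Real.exp_add, ← Real.exp_add]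
  congr 2
  field_simp
  ring
lemma lintegral_pdf_conv {v₁ v₂ : ℝ≥0} (hv₁ : v₁ ≠ 0) (hv₂ : v₂ ≠ 0) (z : ℝ) :
    ∫⁻ x, gaussianPDF 0 v₁ x * gaussianPDF 0 v₂ (z - x) = gaussianPDF 0 (v₁ + v₂) z := by
  have hw : v₁ * v₂ / (v₁ + v₂) ≠ 0 := by
    have : v₁ + v₂ ≠ 0 := by simp [hv₁]
    simp [div_eq_zero_iff, hv₁, hv₂, this]
  calc ∫⁻ x, gaussianPDF 0 v₁ x * gaussianPDF 0 v₂ (z - x)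
      = ∫⁻ x, ENNReal.ofReal (gaussianPDFReal 0 (v₁ + v₂) z) *
          ENNReal.ofReal (gaussianPDFReal ((v₁ : ℝ) * z / ((v₁ : ℝ) + v₂))
            (v₁ * v₂ / (v₁ + v₂)) x) := by
        congr 1 with x
        rw [gaussianPDF, gaussianPDF, ← ENNReal.ofReal_mul (gaussianPDFReal_nonneg _ _ _),
          pdf_conv_pointwise hv₁ hv₂ z x,
          ENNReal.ofReal_mul (gaussianPDFReal_nonneg _ _ _)]
    _ = ENNReal.ofReal (gaussianPDFReal 0 (v₁ + v₂) z) *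
          ∫⁻ x, ENNReal.ofReal (gaussianPDFReal ((v₁ : ℝ) * z / ((v₁ : ℝ) + v₂))
            (v₁ * v₂ / (v₁ + v₂)) x) := by
        rw [lintegral_const_mul _ (measurable_gaussianPDFReal _ _).ennreal_ofReal]
    _ = gaussianPDF 0 (v₁ + v₂) z := by
        rw [lintegral_gaussianPDFReal_eq_one _ hw, mul_one, gaussianPDF]

lemma gaussian_conv_meas (v₁ v₂ : ℝ≥0) :
    ((gaussianReal 0 v₁).prod (gaussianReal 0 v₂)).map (fun p : ℝ × ℝ => p.1 + p.2)
      = gaussianReal 0 (v₁ + v₂) := by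
  by_cases hv₁ : v₁ = 0
  · subst hv₁
    rw [gaussianReal_zero_var, Measure.dirac_prod,
      Measure.map_map measurable_add measurable_prodMk_left]
    have : ((fun p : ℝ × ℝ => p.1 + p.2) ∘ Prod.mk 0) = fun y : ℝ => 0 + y := rfl
    rw [this]
    simpa using gaussianReal_map_const_add (μ := 0) (v := v₂) 0
  by_cases hv₂ : v₂ = 0
  · subst hv₂
    rw [gaussianReal_zero_var, Measure.prod_dirac,
      Measure.map_map measurable_add (measurable_prodMk_right (α := ℝ))]
    have : ((fun p : ℝ × ℝ => p.1 + p.2) ∘ (fun x : ℝ => (x, (0:ℝ)))) = fun y : ℝ => y + 0 := rfl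
    rw [this]
    simpa using gaussianReal_map_add_const (μ := 0) (v := v₁) 0
  ext s hs
  rw [Measure.map_apply measurable_add hs, Measure.prod_apply (measurable_add hs)]
  have hx : ∀ x : ℝ, (gaussianReal 0 v₂) (Prod.mk x ⁻¹' ((fun p : ℝ × ℝ => p.1 + p.2) ⁻¹' s))
      = ∫⁻ z, s.indicator (fun z => gaussianPDF 0 v₂ (z - x)) z := by
    intro x
    have h1 : Prod.mk x ⁻¹' ((fun p : ℝ × ℝ => p.1 + p.2) ⁻¹' s) = (fun y => x + y) ⁻¹' s := rfl
    rw [h1, ← Measure.map_apply (measurable_const_add x) hs,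
      gaussianReal_map_const_add (μ := 0) (v := v₂) x, zero_add,
      gaussianReal_of_var_ne_zero _ hv₂, withDensity_apply _ hs, ← lintegral_indicator hs]
    congr 1 with z
    congr 1 with z
    rw [gaussianPDF, gaussianPDF, gaussianPDFReal_sub z x, zero_add]
  simp_rw [hx]
  have hind : Measurable (fun p : ℝ × ℝ =>
      s.indicator (fun z => gaussianPDF 0 v₂ (z - p.1)) p.2) := by
    have heq : (fun p : ℝ × ℝ => s.indicator (fun z => gaussianPDF 0 v₂ (z - p.1)) p.2)
        = (fun p : ℝ × ℝ => gaussianPDF 0 v₂ (p.2 - p.1)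
            * (Prod.snd ⁻¹' s).indicator 1 p) := by
      ext p
      by_cases hp : p.2 ∈ s <;> simp [Set.indicator, hp]
    rw [heq]
    exact ((measurable_gaussianPDF _ _).comp (measurable_snd.sub measurable_fst)).mul
      (measurable_one.indicator (measurable_snd hs))
  rw [gaussianReal_of_var_ne_zero _ hv₁,
    lintegral_withDensity_eq_lintegral_mul _ (measurable_gaussianPDF _ _)]
  · have hmeas : Measurable (fun p : ℝ × ℝ =>
        gaussianPDF 0 v₁ p.1 * s.indicator (fun z => gaussianPDF 0 v₂ (z - p.1)) p.2) :=
      ((measurable_gaussianPDF _ _).comp measurable_fst).mul hind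
    have hswap := lintegral_lintegral_swap (μ := (volume : Measure ℝ))
      (ν := (volume : Measure ℝ)) (f := fun x z =>
        gaussianPDF 0 v₁ x * s.indicator (fun z => gaussianPDF 0 v₂ (z - x)) z)
      hmeas.aemeasurable
    calc ∫⁻ x, (gaussianPDF 0 v₁ * fun x => ∫⁻ z, s.indicator
          (fun z => gaussianPDF 0 v₂ (z - x)) z) x
        = ∫⁻ x, ∫⁻ z, gaussianPDF 0 v₁ x * s.indicator
            (fun z => gaussianPDF 0 v₂ (z - x)) z := by
          simp only [Pi.mul_apply]
          congr 1 with x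
          exact (lintegral_const_mul _ (((measurable_gaussianPDF 0 v₂).comp
            (measurable_id.sub_const x)).indicator hs)).symm
      _ = ∫⁻ z, ∫⁻ x, gaussianPDF 0 v₁ x * s.indicator
            (fun z => gaussianPDF 0 v₂ (z - x)) z := hswap
      _ = ∫⁻ z, s.indicator (gaussianPDF 0 (v₁ + v₂)) z := by
          congr 1 with z
          by_cases hz : z ∈ s
          · simp only [Set.indicator_of_mem hz]
            exact lintegral_pdf_conv hv₁ hv₂ z
          · simp [Set.indicator_of_notMem hz]
      _ = gaussianReal 0 (v₁ + v₂) s := by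
          rw [lintegral_indicator hs, gaussianReal_of_var_ne_zero, withDensity_apply _ hs]
          simp [hv₁]
  · exact hind.lintegral_prod_right'

lemma exp_form (v : ℝ≥0) (hv : v ≠ 0) (x : ℝ) :
    rexp (-x ^ 2 / (2 * v)) = rexp (-((2 * (v:ℝ))⁻¹) * x ^ 2) := by
  congr 1
  field_simp

lemma integrable_mul_gaussianPDFReal (v : ℝ≥0) (hv : v ≠ 0) :
    Integrable (fun x => x * gaussianPDFReal 0 v x) := by
  have hvpos : (0:ℝ) < v := lt_of_le_of_ne v.coe_nonneg (by exact_mod_cast Ne.symm hv)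
  have h : (fun x : ℝ => x * gaussianPDFReal 0 v x)
      = fun x => (√(2 * π * v))⁻¹ * (x * rexp (-((2 * (v:ℝ))⁻¹) * x ^ 2)) := by
    ext x
    rw [gaussianPDFReal, sub_zero, exp_form v hv]
    ring
  rw [h]
  exact (integrable_mul_exp_neg_mul_sq (by positivity)).const_mul _

lemma integrable_id_gaussianReal (μ : ℝ) (v : ℝ≥0) :
    Integrable id (gaussianReal μ v) := by
  by_cases hv : v = 0
  · simp only [hv, gaussianReal_zero_var]
    refine ⟨measurable_id.aestronglyMeasurable, ?_⟩
    simp only [HasFiniteIntegral]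
    have := lintegral_dirac' μ (f := fun a : ℝ => ‖id a‖ₑ)
      (measurable_enorm)
    rw [this]
    exact enorm_lt_top
  rw [gaussianReal_of_var_ne_zero _ hv, gaussianPDF_def]
  rw [integrable_withDensity_iff (measurable_gaussianPDFReal μ v).ennreal_ofReal
    (ae_of_all _ fun x => ENNReal.ofReal_lt_top)]
  simp only [id]
  have h : (fun x : ℝ => x * (ENNReal.ofReal (gaussianPDFReal μ v x)).toReal)
      = fun x => x * gaussianPDFReal μ v x := by
    ext x
    rw [ENNReal.toReal_ofReal (gaussianPDFReal_nonneg _ _ _)]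
  rw [h]
  have hsub : (fun x : ℝ => x * gaussianPDFReal μ v x)
      = fun x => ((x - μ) * gaussianPDFReal 0 v (x - μ)) + μ * gaussianPDFReal 0 v (x - μ) := by
    ext x
    rw [gaussianPDFReal_sub, zero_add]
    ring
  rw [hsub]
  exact ((integrable_mul_gaussianPDFReal v hv).comp_sub_right μ).add
    (((integrable_gaussianPDFReal 0 v).comp_sub_right μ).const_mul μ)

lemma integral_pos_part_gaussian (v : ℝ≥0) :
    ∫ x, max x 0 ∂(gaussianReal 0 v) = Real.sqrt (v / (2 * π)) := by
  by_cases hv : v = 0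
  · simp [hv]
  have hvpos : (0:ℝ) < v := lt_of_le_of_ne v.coe_nonneg (by exact_mod_cast Ne.symm hv)
  rw [gaussianReal_of_var_ne_zero _ hv, gaussianPDF_def]
  have hco : (fun x => ENNReal.ofReal (gaussianPDFReal 0 v x))
      = fun x => ((gaussianPDFReal 0 v x).toNNReal : ℝ≥0∞) := rfl
  rw [hco, integral_withDensity_eq_integral_smul
    (measurable_gaussianPDFReal 0 v).real_toNNReal _]
  have h1 : (fun x => (gaussianPDFReal 0 v x).toNNReal • max x 0)
      = (Set.Ioi (0:ℝ)).indicator (fun x => x * gaussianPDFReal 0 v x) := by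
    ext x
    rw [NNReal.smul_def, smul_eq_mul, Real.coe_toNNReal _ (gaussianPDFReal_nonneg _ _ _)]
    by_cases hx : x ∈ Set.Ioi (0:ℝ)
    · rw [Set.indicator_of_mem hx]
      rw [Set.mem_Ioi] at hx
      rw [max_eq_left hx.le]
      ring
    · rw [Set.indicator_of_notMem hx]
      rw [Set.mem_Ioi, not_lt] at hx
      rw [max_eq_right hx]
      ring
  rw [h1, integral_indicator measurableSet_Ioi]
  have h2 : ∀ x ∈ Set.Ici (0:ℝ), HasDerivAt (fun x => -(v:ℝ) * ((√(2 * π * v))⁻¹ * rexp (-x ^ 2 / (2 * v)))) (x * gaussianPDFReal 0 v x) x := by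
    intro x _
    have hd : HasDerivAt (fun x : ℝ => -x ^ 2 / (2 * v)) (-(2 * x) / (2 * v)) x := by
      have := ((hasDerivAt_pow 2 x).neg).div_const (2 * (v:ℝ))
      simpa using this
    have := ((hd.exp.const_mul ((√(2 * π * v))⁻¹)).const_mul (-(v:ℝ)))
    refine this.congr_deriv ?_
    rw [gaussianPDFReal, sub_zero]
    field_simp
  have h3 : IntegrableOn (fun x => x * gaussianPDFReal 0 v x) (Set.Ioi 0) :=
    (integrable_mul_gaussianPDFReal v hv).integrableOn
  have h4 : Tendsto (fun x => -(v:ℝ) * ((√(2 * π * v))⁻¹ * rexp (-x ^ 2 / (2 * v)))) atTop (nhds 0) := by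
    have hexp : Tendsto (fun x : ℝ => rexp (-x ^ 2 / (2 * v))) atTop (nhds 0) := by
      apply Real.tendsto_exp_atBot.comp
      apply Tendsto.atBot_div_const (by positivity : (0:ℝ) < 2 * v)
      exact Filter.tendsto_neg_atBot_iff.mpr (tendsto_pow_atTop two_ne_zero)
    simpa using (hexp.const_mul ((√(2 * π * (v:ℝ)))⁻¹)).const_mul (-(v:ℝ))
  have h5 := integral_Ioi_of_hasDerivAt_of_tendsto' h2 h3 h4
  rw [h5]
  have hval : (0:ℝ) - (-(v:ℝ) * ((√(2 * π * v))⁻¹ * rexp (-(0:ℝ) ^ 2 / (2 * v))))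
      = (v:ℝ) * (√(2 * π * (v:ℝ)))⁻¹ := by
    norm_num
  rw [hval]
  have hdiv : (v:ℝ)/(2*π) = ((v:ℝ)^2)/(2*π*(v:ℝ)) := by
    field_simp
  rw [hdiv, Real.sqrt_div (sq_nonneg _), Real.sqrt_sq v.coe_nonneg, div_eq_mul_inv]

lemma gaussian_Ioi_half (v : ℝ≥0) (hv : v ≠ 0) :
    gaussianReal 0 v (Set.Ioi 0) = 1/2 := by
  have hzero : gaussianReal 0 v {0} = 0 :=
    (gaussianReal_absolutelyContinuous 0 hv) (measure_singleton 0)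
  have hneg : gaussianReal 0 v (Set.Iio 0) = gaussianReal 0 v (Set.Ioi 0) := by
    have hmap := gaussianReal_map_const_mul (μ := 0) (v := v) (-1)
    have h1 : (NNReal.mk ((-1:ℝ)^2) (sq_nonneg _)) = 1 := by
      ext; norm_num
    rw [h1, one_mul, mul_zero] at hmap
    conv_rhs => rw [← hmap]
    rw [Measure.map_apply (measurable_const_mul _) measurableSet_Ioi]
    congr 1
    ext x
    simp only [Set.mem_Iio, Set.mem_preimage, Set.mem_Ioi]
    constructor
    · intro h; linarith
    · intro h; linarith
  have huniv : gaussianReal 0 v (Set.Iio 0) + gaussianReal 0 v (Set.Ioi 0) = 1 := by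
    rw [← measure_union (by rw [Set.disjoint_left]; intro x hx1 hx2; rw [Set.mem_Iio] at hx1; rw [Set.mem_Ioi] at hx2; linarith) measurableSet_Ioi, Set.Iio_union_Ioi,
      measure_compl (measurableSet_singleton 0) (measure_ne_top _ _), hzero, measure_univ,
      tsub_zero]
  rw [hneg] at huniv
  have h2 : 2 * gaussianReal 0 v (Set.Ioi 0) = 1 := by rw [two_mul]; exact huniv
  rw [ENNReal.eq_div_iff (by norm_num) (by norm_num)]
  exact h2

/-- In the proxy-metric model — `(τ_Y, τ_S)` a centered bivariate Gaussian
vector with covariance `Λ`, independently `(ε_Y, ε_S)` a centered bivariate Gaussian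
vector with covariance `(2/M)Ω`, and estimated effects `τ̂_Y = τ_Y + ε_Y`,
`τ̂_S = τ_S + ε_S` — the naive (plug-in) expected reward of the decision rule that
launches when the observed proxy effect is positive satisfies
`E[τ̂_Y | τ̂_S > 0] = √(2/π) · (Λ₁₂ + 2Ω₁₂/M) / √(Λ₂₂ + 2Ω₂₂/M)`;
in particular it depends on the sampling-error covariance `Ω₁₂` and not only on the
true treatment-effect covariance `Λ₁₂`.  Here `E[A | E] := E[A·1_E]/P(E)`. -/
theorem proxy_model_naive_reward
    {Ωs : Type*} [MeasurableSpace Ωs] (P : Measure Ωs) [IsProbabilityMeasure P]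
    (M : ℝ) (hM : 0 < M)
    (Λ11 Λ12 Λ22 Ω11 Ω12 Ω22 : ℝ)
    (hΛ : 0 ≤ Λ11 ∧ 0 ≤ Λ22 ∧ Λ12 ^ 2 ≤ Λ11 * Λ22)
    (hΩ : 0 ≤ Ω11 ∧ 0 ≤ Ω22 ∧ Ω12 ^ 2 ≤ Ω11 * Ω22)
    (hpos : 0 < Λ22 + 2 / M * Ω22)
    (τY τS εY εS : Ωs → ℝ)
    (hτY : Measurable τY) (hτS : Measurable τS) (hεY : Measurable εY) (hεS : Measurable εS)
    (hτlaw : IsBivariateGaussian (P.map (fun ω => (τY ω, τS ω))) 0 0 Λ11 Λ12 Λ22)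
    (hεlaw : IsBivariateGaussian (P.map (fun ω => (εY ω, εS ω))) 0 0
      (2 / M * Ω11) (2 / M * Ω12) (2 / M * Ω22))
    (hindep : IndepFun (fun ω => (τY ω, τS ω)) (fun ω => (εY ω, εS ω)) P) :
    (∫ ω in {ω | 0 < τS ω + εS ω}, (τY ω + εY ω) ∂P) / (P {ω | 0 < τS ω + εS ω}).toReal =
      Real.sqrt (2 / π) * (Λ12 + 2 * Ω12 / M) / Real.sqrt (Λ22 + 2 * Ω22 / M) := by
  obtain ⟨hΛ11, hΛ22, hΛ12⟩ := hΛ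
  obtain ⟨hΩ11, hΩ22, hΩ12⟩ := hΩ
  have hMv : (0:ℝ) ≤ 2 / M := by positivity
  set X : Ωs → ℝ := fun ω => τY ω + εY ω with hXdef
  set Y : Ωs → ℝ := fun ω => τS ω + εS ω with hYdef
  have hmX : Measurable X := hτY.add hεY
  have hmY : Measurable Y := hτS.add hεS
  set V11 : ℝ := Λ11 + 2 / M * Ω11 with hV11def
  set C : ℝ := Λ12 + 2 / M * Ω12 with hCdef
  set v : ℝ := Λ22 + 2 / M * Ω22 with hvdef
  have hvpos : 0 < v := hpos
  have hq1 : ∀ a b : ℝ, 0 ≤ a^2*Λ11 + 2*a*b*Λ12 + b^2*Λ22 := quad_nonneg hΛ11 hΛ22 hΛ12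
  have hq2 : ∀ a b : ℝ, 0 ≤ a^2*(2/M*Ω11) + 2*a*b*(2/M*Ω12) + b^2*(2/M*Ω22) := by
    intro a b
    have h := quad_nonneg hΩ11 hΩ22 hΩ12 a b
    have := mul_nonneg hMv h
    nlinarith [this]
  -- the law of a*X + b*Y
  have hlaw : ∀ a b : ℝ, P.map (fun ω => a * X ω + b * Y ω)
      = gaussianReal 0 (Real.toNNReal (a^2*V11 + 2*a*b*C + b^2*v)) := by
    intro a b
    have hτm : Measurable fun ω => (τY ω, τS ω) := hτY.prodMk hτS
    have hεm : Measurable fun ω => (εY ω, εS ω) := hεY.prodMk hεS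
    have hlin : Measurable fun p : ℝ × ℝ => a * p.1 + b * p.2 :=
      (measurable_fst.const_mul a).add (measurable_snd.const_mul b)
    have hU : P.map (fun ω => a * τY ω + b * τS ω)
        = gaussianReal 0 (Real.toNNReal (a^2*Λ11 + 2*a*b*Λ12 + b^2*Λ22)) := by
      have h := hτlaw a b
      rw [Measure.map_map hlin hτm] at h
      simpa [Function.comp_def] using h
    have hW : P.map (fun ω => a * εY ω + b * εS ω)
        = gaussianReal 0 (Real.toNNReal (a^2*(2/M*Ω11) + 2*a*b*(2/M*Ω12) + b^2*(2/M*Ω22))) := by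
      have h := hεlaw a b
      rw [Measure.map_map hlin hεm] at h
      simpa [Function.comp_def] using h
    have hmU : Measurable fun ω => a * τY ω + b * τS ω :=
      (hτY.const_mul a).add (hτS.const_mul b)
    have hmW : Measurable fun ω => a * εY ω + b * εS ω :=
      (hεY.const_mul a).add (hεS.const_mul b)
    have hUW : IndepFun (fun ω => a * τY ω + b * τS ω) (fun ω => a * εY ω + b * εS ω) P :=
      hindep.comp hlin hlin
    have hprod := (indepFun_iff_map_prod_eq_prod_map_map hmU.aemeasurable
      hmW.aemeasurable).mp hUW
    have heq : (fun ω => a * X ω + b * Y ω)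
        = (fun p : ℝ × ℝ => p.1 + p.2) ∘
          (fun ω => (a * τY ω + b * τS ω, a * εY ω + b * εS ω)) := by
      funext ω
      simp only [hXdef, hYdef, Function.comp]
      ring
    rw [heq, ← Measure.map_map measurable_add (hmU.prodMk hmW), hprod, hU, hW,
      gaussian_conv_meas]
    congr 1
    rw [← Real.toNNReal_add (hq1 a b) (hq2 a b)]
    congr 1
    simp only [hV11def, hCdef, hvdef]
    ring
  -- laws of X and Y
  have hXlaw : P.map X = gaussianReal 0 (Real.toNNReal V11) := by
    have h := hlaw 1 0
    simp only [one_mul, zero_mul, add_zero, one_pow, mul_zero, mul_one, zero_add] at h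
    convert h using 2
    · norm_num
  have hYlaw : P.map Y = gaussianReal 0 (Real.toNNReal v) := by
    have h := hlaw 0 1
    simp only [one_mul, zero_mul, zero_add, one_pow, mul_zero, mul_one, add_zero] at h
    convert h using 2
    · norm_num
  have hXint : Integrable X P := by
    have := (integrable_map_measure aestronglyMeasurable_id hmX.aemeasurable).mp
      (by rw [hXlaw]; exact integrable_id_gaussianReal _ _)
    exact this
  have hYint : Integrable Y P := by
    have := (integrable_map_measure aestronglyMeasurable_id hmY.aemeasurable).mp
      (by rw [hYlaw]; exact integrable_id_gaussianReal _ _)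
    exact this
  have hvne : Real.toNNReal v ≠ 0 := by
    simp only [ne_eq, Real.toNNReal_eq_zero, not_le]
    exact hvpos
  -- denominator
  have hsetm : MeasurableSet {ω | 0 < Y ω} := hmY measurableSet_Ioi
  have hPhalf : P {ω | 0 < Y ω} = 1/2 := by
    have : {ω | 0 < Y ω} = Y ⁻¹' Set.Ioi 0 := rfl
    rw [this, ← Measure.map_apply hmY measurableSet_Ioi, hYlaw, gaussian_Ioi_half _ hvne]
  -- the function G
  set q : ℝ → ℝ := fun k => k^2*V11 + 2*k*C + v with hqdef
  have hq0 : q 0 = v := by simp [hqdef]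
  have hGval : ∀ k : ℝ, (∫ ω, max (k * X ω + Y ω) 0 ∂P)
      = Real.sqrt ((Real.toNNReal (q k) : ℝ) / (2*π)) := by
    intro k
    have hmf : Measurable fun ω => k * X ω + Y ω := (hmX.const_mul k).add hmY
    have h1 : (∫ ω, max (k * X ω + Y ω) 0 ∂P)
        = ∫ x, max x 0 ∂(P.map (fun ω => k * X ω + Y ω)) := by
      exact (integral_map hmf.aemeasurable
        (Continuous.aestronglyMeasurable (continuous_id.max continuous_const))).symm
    have h2 : P.map (fun ω => k * X ω + Y ω) = gaussianReal 0 (Real.toNNReal (q k)) := by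
      have h := hlaw k 1
      have heq : (fun ω => k * X ω + Y ω) = fun ω => k * X ω + 1 * Y ω := by
        funext ω; ring
      rw [heq, h]
      congr 1
      simp only [hqdef]
      ring
    rw [h1, h2, integral_pos_part_gaussian]
  -- eventual positivity of q
  have hqc : Continuous q := by
    simp only [hqdef]
    exact (((continuous_pow 2).mul continuous_const).add
      ((continuous_const.mul continuous_id).mul continuous_const)).add continuous_const
  have hev : ∀ᶠ k in 𝓝 (0:ℝ), 0 < q k := by
    have h := hqc.tendsto 0
    rw [hq0] at h
    exact h (Ioi_mem_nhds hvpos)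
  -- derivative of the explicit function
  have hsq : HasDerivAt (fun k => Real.sqrt (q k / (2*π)))
      (((2*C)/(2*π)) / (2*Real.sqrt (v/(2*π)))) 0 := by
    have hpoly : HasDerivAt q (2*C) 0 := by
      have h1 := (((hasDerivAt_pow 2 (0:ℝ)).mul_const V11).add
        (((hasDerivAt_id (0:ℝ)).const_mul 2).mul_const C)).add_const v
      refine h1.congr_deriv ?_
      norm_num
    have hne : q 0 / (2*π) ≠ 0 := by
      rw [hq0]
      positivity
    have h := (hpoly.div_const (2*π)).sqrt hne
    rw [hq0] at h
    exact h
  -- derivative via dominated convergence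
  set F' : Ωs → ℝ := {ω | 0 < Y ω}.indicator X with hF'def
  have haeY : ∀ᵐ ω ∂P, Y ω ≠ 0 := by
    rw [ae_iff]
    have hs0 : {ω | ¬ Y ω ≠ 0} = Y ⁻¹' {0} := by
      ext ω; simp
    rw [hs0, ← Measure.map_apply hmY (measurableSet_singleton 0), hYlaw]
    exact (gaussianReal_absolutelyContinuous 0 hvne) (measure_singleton 0)
  have hdom := hasDerivAt_integral_of_dominated_loc_of_lip
    (F := fun k ω => max (k * X ω + Y ω) 0) (F' := F') (x₀ := (0:ℝ)) (s := Metric.ball 0 1)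
    (bound := fun ω => |X ω|) (Metric.ball_mem_nhds 0 one_pos)
    (Filter.Eventually.of_forall fun k =>
      (((hmX.const_mul k).add hmY).max measurable_const).aestronglyMeasurable)
    (by
      show Integrable (fun ω => max ((0:ℝ) * X ω + Y ω) 0) P
      have heq : (fun ω => max ((0:ℝ) * X ω + Y ω) 0) = fun ω => max (Y ω) 0 := by
        funext ω; norm_num
      rw [heq]
      refine hYint.mono (hmY.max measurable_const).aestronglyMeasurable ?_
      refine Filter.Eventually.of_forall fun ω => ?_
      simp only [Real.norm_eq_abs]
      rcases le_or_gt (Y ω) 0 with h | h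
      · rw [max_eq_right h, abs_zero]
        exact abs_nonneg _
      · rw [max_eq_left h.le]
        )
    ((hmX.indicator hsetm).aestronglyMeasurable)
    (Filter.Eventually.of_forall fun ω => by
      have hL : LipschitzWith (Real.nnabs (|X ω|)) (fun k => max (k * X ω + Y ω) 0) := by
        apply LipschitzWith.of_dist_le_mul
        intro k1 k2
        simp only [Real.dist_eq]
        calc |max (k1 * X ω + Y ω) 0 - max (k2 * X ω + Y ω) 0|
            ≤ |(k1 * X ω + Y ω) - (k2 * X ω + Y ω)| := abs_max_sub_max_le_abs _ _ _
          _ = |X ω| * |k1 - k2| := by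
              rw [show (k1 * X ω + Y ω) - (k2 * X ω + Y ω) = X ω * (k1 - k2) by ring,
                abs_mul]
          _ = ↑(Real.nnabs |X ω|) * |k1 - k2| := by
              rw [Real.coe_nnabs, abs_abs]
      exact hL.lipschitzOnWith)
    hXint.abs
    (by
      filter_upwards [haeY] with ω hω
      have hco : ContinuousAt (fun k : ℝ => k * X ω + Y ω) 0 :=
        ((continuous_id.mul continuous_const).add continuous_const).continuousAt
      have hval : (fun k : ℝ => k * X ω + Y ω) 0 = Y ω := by norm_num
      rcases hω.lt_or_gt with hneg | hpos'
      · have hev2 : ∀ᶠ k in 𝓝 (0:ℝ), k * X ω + Y ω < 0 := by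
          have ht : Tendsto (fun k : ℝ => k * X ω + Y ω) (𝓝 0) (𝓝 (Y ω)) := by
            have h' : Tendsto (fun k : ℝ => k * X ω + Y ω) (𝓝 0) (𝓝 (0 * X ω + Y ω)) := hco
            simpa using h'
          exact ht.eventually_lt_const hneg
        have hzero : F' ω = 0 := by
          rw [hF'def, Set.indicator_of_notMem]
          simp only [Set.mem_setOf_eq, not_lt]
          exact hneg.le
        rw [hzero]
        refine (hasDerivAt_const (0:ℝ) (0:ℝ)).congr_of_eventuallyEq ?_
        filter_upwards [hev2] with k hk
        rw [max_eq_right hk.le]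
      · have hev2 : ∀ᶠ k in 𝓝 (0:ℝ), 0 < k * X ω + Y ω := by
          have ht : Tendsto (fun k : ℝ => k * X ω + Y ω) (𝓝 0) (𝓝 (Y ω)) := by
            have h' : Tendsto (fun k : ℝ => k * X ω + Y ω) (𝓝 0) (𝓝 (0 * X ω + Y ω)) := hco
            simpa using h'
          exact ht.eventually_const_lt hpos'
        have hmem : F' ω = X ω := by
          rw [hF'def, Set.indicator_of_mem]
          exact hpos'
        rw [hmem]
        have hbase : HasDerivAt (fun k : ℝ => k * X ω + Y ω) (X ω) 0 :=
          (hasDerivAt_mul_const (X ω)).add_const (Y ω)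
        refine hbase.congr_of_eventuallyEq ?_
        filter_upwards [hev2] with k hk
        rw [max_eq_left hk.le])
  obtain ⟨hF'int, hderiv⟩ := hdom
  -- identify the derivative
  have hEq : (fun k => ∫ ω, max (k * X ω + Y ω) 0 ∂P)
      =ᶠ[𝓝 (0:ℝ)] (fun k => Real.sqrt (q k / (2*π))) := by
    filter_upwards [hev] with k hk
    rw [hGval k, Real.coe_toNNReal _ hk.le]
  have hderiv2 : HasDerivAt (fun k => Real.sqrt (q k / (2*π))) (∫ ω, F' ω ∂P) 0 :=
    hderiv.congr_of_eventuallyEq hEq.symm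
  have huniq : ∫ ω, F' ω ∂P = ((2*C)/(2*π)) / (2*Real.sqrt (v/(2*π))) :=
    hderiv2.unique hsq
  have hnum : (∫ ω in {ω | 0 < Y ω}, X ω ∂P) = ∫ ω, F' ω ∂P :=
    (integral_indicator hsetm).symm
  -- put everything together
  rw [hnum, huniq, hPhalf]
  have htoReal : ((1/2 : ℝ≥0∞)).toReal = 1/2 := by norm_num
  rw [htoReal]
  have hC : Λ12 + 2 * Ω12 / M = C := by rw [hCdef]; ring
  have hv2 : Λ22 + 2 * Ω22 / M = v := by rw [hvdef]; ring
  rw [hC, hv2]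
  -- final algebra
  have hπ : 0 < π := Real.pi_pos
  have h2 : √(2:ℝ) * √2 = 2 := Real.mul_self_sqrt (by norm_num)
  have hp : √π * √π = π := Real.mul_self_sqrt hπ.le
  have hvv : √v * √v = v := Real.mul_self_sqrt hvpos.le
  have hsv : 0 < √v := Real.sqrt_pos.mpr hvpos
  have hsp : 0 < √π := Real.sqrt_pos.mpr hπ
  have hs2 : 0 < √(2:ℝ) := Real.sqrt_pos.mpr (by norm_num)
  rw [Real.sqrt_div hvpos.le, Real.sqrt_div (by norm_num : (0:ℝ) ≤ 2),
    Real.sqrt_mul (by norm_num : (0:ℝ) ≤ 2) π]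
  field_simp
  ring_nf
  rw [Real.sq_sqrt hπ.le]
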